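/- Let R be a ring and M an R-module of type FP_n. If 0 → K → P → M → 0 is a short exact sequence of R-modules with P finitely generated projective, then K is of type FP_{n-1}. -/

import Mathlib

open CategoryTheory


section FPd

variable (R : Type) [Ring R]

/-- Recursive finiteness predicate: `FPd R n M` means there is a partial resolution
`Q_n → ⋯ → Q_0 → M → 0` by finitely generated projective modules. -/
def FPd : ℕ → ∀ (M : Type) [AddCommGroup M] [Module R M], Prop
  | 0, M, _, _ => Module.Finite R M
  | (n+1), M, _, _ => ∃ (Q : Type) (_ : AddCommGroup Q) (_ : Module R Q),
      Module.Finite R Q ∧ Module.Projective R Q ∧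
      ∃ f : Q →ₗ[R] M, Function.Surjective f ∧ FPd n (LinearMap.ker f)

variable {R}

lemma fpd_congr {M N : Type} [AddCommGroup M] [Module R M] [AddCommGroup N] [Module R N]
    (e : M ≃ₗ[R] N) : ∀ {n : ℕ}, FPd R n M → FPd R n N
  | 0, h => by haveI : Module.Finite R M := h; exact Module.Finite.equiv e
  | (n+1), ⟨Q, _, _, hfin, hproj, f, hsurj, hker⟩ => by
    refine ⟨Q, _, _, hfin, hproj, e.toLinearMap ∘ₗ f, e.surjective.comp hsurj, ?_⟩
    have hk : LinearMap.ker (e.toLinearMap ∘ₗ f) = LinearMap.ker f := by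
      ext x; simp [LinearMap.mem_ker]
    rw [hk]
    exact hker

lemma fpd_finite {M : Type} [AddCommGroup M] [Module R M] {n : ℕ} (h : FPd R n M) :
    Module.Finite R M := by
  cases n with
  | zero => exact (h : Module.Finite R M)
  | succ n =>
    obtain ⟨Q, _, _, hfin, _, f, hsurj, _⟩ := h
    exact Module.Finite.of_surjective f hsurj

end FPd

section Split

variable {R : Type} [Ring R]

/-- If `ψ : A → B` has a linear section, then `A ≃ ker ψ × B`. -/
noncomputable def kerSplitEquiv {A B : Type} [AddCommGroup A] [Module R A]
    [AddCommGroup B] [Module R B] (ψ : A →ₗ[R] B) (σ : B →ₗ[R] A)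
    (hσ : ψ ∘ₗ σ = LinearMap.id) : A ≃ₗ[R] (LinearMap.ker ψ × B) :=
  have hex : Function.Exact (LinearMap.ker ψ).subtype ψ := by
    intro y
    constructor
    · intro hy; exact ⟨⟨y, hy⟩, rfl⟩
    · rintro ⟨⟨x, hx⟩, rfl⟩; exact hx
  ((hex.splitSurjectiveEquiv (Submodule.injective_subtype _)) ⟨σ, hσ⟩).1

lemma fpd_prod {M Q : Type} [AddCommGroup M] [Module R M] [AddCommGroup Q] [Module R Q]
    [hQf : Module.Finite R Q] [hQp : Module.Projective R Q] {n : ℕ} (h : FPd R n M) :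
    FPd R n (M × Q) := by
  cases n with
  | zero =>
    haveI : Module.Finite R M := h
    exact (inferInstance : Module.Finite R (M × Q))
  | succ n =>
    obtain ⟨Q₀, _, _, hfin, hproj, f, hsurj, hker⟩ := h
    refine ⟨Q₀ × Q, _, _, inferInstance, by haveI := hproj; haveI := hQp; exact inferInstance,
      f.prodMap LinearMap.id, hsurj.prodMap Function.surjective_id, ?_⟩
    have e : (LinearMap.ker f) ≃ₗ[R] LinearMap.ker (f.prodMap (LinearMap.id : Q →ₗ[R] Q)) := by
      refine LinearEquiv.ofBijective
        (LinearMap.codRestrict _ ((LinearMap.inl R Q₀ Q) ∘ₗ (LinearMap.ker f).subtype)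
          (fun x => by simp [LinearMap.mem_ker, x.2])) ⟨?_, ?_⟩
      · intro x y hxy
        have h2 := Subtype.ext_iff.mp hxy
        change ((x : Q₀), (0 : Q)) = ((y : Q₀), (0 : Q)) at h2
        simp only [LinearMap.codRestrict_apply, LinearMap.comp_apply, LinearMap.inl_apply,
          Prod.mk.injEq] at h2
        exact Subtype.ext (Subtype.ext_iff.mp (Submodule.injective_subtype _ (by
          simpa using h2.1)))
      · rintro ⟨⟨a, b⟩, hab⟩
        rw [LinearMap.mem_ker, Prod.ext_iff] at hab
        simp only [LinearMap.prodMap_apply, LinearMap.id_apply] at hab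
        refine ⟨⟨a, by simpa using hab.1⟩, Subtype.ext ?_⟩
        simp only [LinearMap.codRestrict_apply, LinearMap.comp_apply, LinearMap.inl_apply]
        simp only [Prod.snd_zero] at hab
        exact Prod.ext (by rfl) (by exact hab.2.symm)
    exact fpd_congr e hker

end Split

section Strip

variable {R : Type} [Ring R]

lemma fpd_of_prod {M Q : Type} [AddCommGroup M] [Module R M] [AddCommGroup Q] [Module R Q]
    [hQf : Module.Finite R Q] [hQp : Module.Projective R Q] {n : ℕ}
    (h : FPd R n (M × Q)) : FPd R n M := by
  cases n with
  | zero =>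
    haveI : Module.Finite R (M × Q) := h
    exact Module.Finite.of_surjective (LinearMap.fst R M Q) Prod.fst_surjective
  | succ n =>
    obtain ⟨Q₀, _, _, hfin, hproj, f, hsurj, hker⟩ := h
    set g : Q₀ →ₗ[R] M := (LinearMap.fst R M Q) ∘ₗ f with hg
    have hgsurj : Function.Surjective g := Prod.fst_surjective.comp hsurj
    set φ : LinearMap.ker g →ₗ[R] Q :=
      (LinearMap.snd R M Q) ∘ₗ f ∘ₗ (LinearMap.ker g).subtype with hφ
    have hφsurj : Function.Surjective φ := by
      intro q
      obtain ⟨y, hy⟩ := hsurj (0, q)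
      have hyg : y ∈ LinearMap.ker g := by
        simp [hg, LinearMap.mem_ker, hy]
      exact ⟨⟨y, hyg⟩, by simp [hφ, hy]⟩
    obtain ⟨σ, hσ⟩ := Module.projective_lifting_property φ LinearMap.id hφsurj
    -- ker φ ≃ ker f
    have e2 : (LinearMap.ker φ) ≃ₗ[R] (LinearMap.ker f) := by
      refine LinearEquiv.ofBijective
        (LinearMap.codRestrict _ ((LinearMap.ker g).subtype ∘ₗ (LinearMap.ker φ).subtype)
          (fun x => ?_)) ⟨?_, ?_⟩
      · have h1 : (LinearMap.fst R M Q) (f x.1.1) = 0 := x.1.2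
        have h2 : (LinearMap.snd R M Q) (f x.1.1) = 0 := x.2
        rw [LinearMap.mem_ker]
        exact Prod.ext (by simpa using h1) (by simpa using h2)
      · intro x y hxy
        have h2 := Subtype.ext_iff.mp hxy
        simp only [LinearMap.codRestrict_apply, LinearMap.comp_apply] at h2
        exact Subtype.ext (Subtype.ext h2)
      · rintro ⟨y, hy⟩
        rw [LinearMap.mem_ker] at hy
        have hyg : y ∈ LinearMap.ker g := by simp [hg, LinearMap.mem_ker, hy]
        have hyφ : (⟨y, hyg⟩ : LinearMap.ker g) ∈ LinearMap.ker φ := by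
          simp [hφ, LinearMap.mem_ker, hy]
        exact ⟨⟨⟨y, hyg⟩, hyφ⟩, rfl⟩
    have hkerφ : FPd R n (LinearMap.ker φ) := fpd_congr e2.symm hker
    have hprod : FPd R n ((LinearMap.ker φ) × Q) := fpd_prod hkerφ
    have hkerg : FPd R n (LinearMap.ker g) :=
      fpd_congr (kerSplitEquiv φ σ hσ).symm hprod
    exact ⟨Q₀, _, _, hfin, hproj, g, hgsurj, hkerg⟩

end Strip

section Schanuel

variable {R : Type} [Ring R]

/-- If `M` is of type `FP_{n+1}` and `g : P ↠ M` with `P` finitely generated projective,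
then `ker g` is of type `FP_n`. -/
lemma fpd_ker_of_surjective {M P : Type} [AddCommGroup M] [Module R M]
    [AddCommGroup P] [Module R P] [hPf : Module.Finite R P] [hPp : Module.Projective R P]
    (g : P →ₗ[R] M) (hg : Function.Surjective g) {n : ℕ} (hM : FPd R (n + 1) M) :
    FPd R n (LinearMap.ker g) := by
  obtain ⟨Q₀, _, _, hfin, hproj, e, hesurj, hL⟩ := hM
  -- the pullback
  set θ : P × Q₀ →ₗ[R] M := (g ∘ₗ LinearMap.fst R P Q₀) - (e ∘ₗ LinearMap.snd R P Q₀) with hθ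
  set X := LinearMap.ker θ with hX
  have memX : ∀ p q, ((p, q) ∈ X ↔ g p = e q) := by
    intro p q
    simp [hX, hθ, LinearMap.mem_ker, sub_eq_zero]
  -- the two projections
  set ψ : X →ₗ[R] Q₀ := (LinearMap.snd R P Q₀) ∘ₗ X.subtype with hψ
  set φ : X →ₗ[R] P := (LinearMap.fst R P Q₀) ∘ₗ X.subtype with hφ
  have hψsurj : Function.Surjective ψ := by
    intro q
    obtain ⟨p, hp⟩ := hg (e q)
    exact ⟨⟨(p, q), (memX p q).2 hp⟩, rfl⟩
  have hφsurj : Function.Surjective φ := by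
    intro p
    obtain ⟨q, hq⟩ := hesurj (g p)
    exact ⟨⟨(p, q), (memX p q).2 hq.symm⟩, rfl⟩
  -- ker ψ ≃ ker g
  have e1 : (LinearMap.ker g) ≃ₗ[R] (LinearMap.ker ψ) := by
    refine LinearEquiv.ofBijective
      (LinearMap.codRestrict _
        (LinearMap.codRestrict X ((LinearMap.inl R P Q₀) ∘ₗ (LinearMap.ker g).subtype)
          (fun x => (memX x.1 0).2 (by simpa using x.2)))
        (fun x => by simp [hψ]; rfl)) ⟨?_, ?_⟩
    · intro x y hxy
      have h2 := Subtype.ext_iff.mp (Subtype.ext_iff.mp hxy)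
      change ((x : P), (0 : Q₀)) = ((y : P), (0 : Q₀)) at h2
      simp only [LinearMap.codRestrict_apply, LinearMap.comp_apply, LinearMap.inl_apply,
        Prod.mk.injEq] at h2
      exact Subtype.ext h2.1
    · rintro ⟨⟨⟨p, q⟩, hpq⟩, hker⟩
      have hq0 : q = 0 := by simpa [hψ] using hker
      subst hq0
      have hp : g p = 0 := by rw [(memX p 0).1 hpq]; simp
      exact ⟨⟨p, hp⟩, by apply Subtype.ext; apply Subtype.ext; rfl⟩
  -- ker φ ≃ ker e
  have e2 : (LinearMap.ker e) ≃ₗ[R] (LinearMap.ker φ) := by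
    refine LinearEquiv.ofBijective
      (LinearMap.codRestrict _
        (LinearMap.codRestrict X ((LinearMap.inr R P Q₀) ∘ₗ (LinearMap.ker e).subtype)
          (fun x => (memX 0 x.1).2 (by simp [(LinearMap.mem_ker).1 x.2])))
        (fun x => by simp [hφ]; rfl)) ⟨?_, ?_⟩
    · intro x y hxy
      have h2 := Subtype.ext_iff.mp (Subtype.ext_iff.mp hxy)
      change ((0 : P), (x : Q₀)) = ((0 : P), (y : Q₀)) at h2
      simp only [LinearMap.codRestrict_apply, LinearMap.comp_apply, LinearMap.inr_apply,
        Prod.mk.injEq] at h2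
      exact Subtype.ext h2.2
    · rintro ⟨⟨⟨p, q⟩, hpq⟩, hker⟩
      have hp0 : p = 0 := by simpa [hφ] using hker
      subst hp0
      have hq : e q = 0 := by rw [← (memX 0 q).1 hpq]; simp
      exact ⟨⟨q, hq⟩, by apply Subtype.ext; apply Subtype.ext; rfl⟩
  -- sections
  obtain ⟨σψ, hσψ⟩ := (by haveI := hproj; exact
    Module.projective_lifting_property ψ LinearMap.id hψsurj)
  obtain ⟨σφ, hσφ⟩ := Module.projective_lifting_property φ LinearMap.id hφsurj
  -- chain of transfers
  have h1 : FPd R n (LinearMap.ker φ) := fpd_congr e2 hL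
  have h2 : FPd R n ((LinearMap.ker φ) × P) := fpd_prod h1
  have h3 : FPd R n X := fpd_congr (kerSplitEquiv φ σφ hσφ).symm h2
  have h4 : FPd R n ((LinearMap.ker ψ) × Q₀) :=
    fpd_congr (kerSplitEquiv ψ σψ hσψ) h3
  have h5 : FPd R n (LinearMap.ker ψ) := by
    haveI := hfin
    haveI := hproj
    exact fpd_of_prod h4
  exact fpd_congr e1.symm h5

end Schanuel

section FromResolution

open CategoryTheory

/-- An `R`-module `M` is of type `FP_n` if it admits a projective resolution that is
finitely generated in degrees `≤ n`. -/
def IsTypeFP (R : Type) [Ring R] (M : ModuleCat R) (n : ℕ) : Prop :=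
  ∃ res : ProjectiveResolution M, ∀ i ≤ n, Module.Finite R (res.complex.X i)

variable {R : Type} [Ring R]

lemma moduleCat_projective (N : ModuleCat R) [h : Projective N] :
    Module.Projective R N :=
  (IsProjective.iff_projective N).mpr h

lemma range_eq_ker_of_exact {A B C : ModuleCat R} (f : A ⟶ B) (g : B ⟶ C)
    (w : f ≫ g = 0) (h : (ShortComplex.mk f g w).Exact) :
    LinearMap.range f.hom = LinearMap.ker g.hom :=
  (ShortComplex.moduleCat_exact_iff_range_eq_ker _).1 h

lemma fpd_syzygy {N : ModuleCat R} (res : ProjectiveResolution N) {n : ℕ}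
    (hfin : ∀ j ≤ n, Module.Finite R (res.complex.X j)) :
    ∀ (k i : ℕ), i + k + 2 ≤ n →
      FPd R k (LinearMap.ker (res.complex.d (i+1) i).hom) := by
  intro k
  induction k with
  | zero =>
    intro i hi
    have hr : LinearMap.range (res.complex.d (i+2) (i+1)).hom
        = LinearMap.ker (res.complex.d (i+1) i).hom :=
      range_eq_ker_of_exact _ _ _ (res.exact_succ i)
    haveI : Module.Finite R (res.complex.X (i+2)) := hfin _ (by omega)
    rw [← hr]
    exact (Module.Finite.range (res.complex.d (i+2) (i+1)).hom : _)
  | succ k ih =>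
    intro i hi
    have hr : LinearMap.range (res.complex.d (i+2) (i+1)).hom
        = LinearMap.ker (res.complex.d (i+1) i).hom :=
      range_eq_ker_of_exact _ _ _ (res.exact_succ i)
    have hmem : ∀ x, (res.complex.d (i+2) (i+1)).hom x ∈ LinearMap.ker (res.complex.d (i+1) i).hom := by
      intro x
      rw [← hr]
      exact ⟨x, rfl⟩
    set q : res.complex.X (i+2) →ₗ[R] LinearMap.ker (res.complex.d (i+1) i).hom :=
      LinearMap.codRestrict _ (res.complex.d (i+2) (i+1)).hom hmem with hq
    have hqsurj : Function.Surjective q := by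
      rintro ⟨y, hy⟩
      rw [← hr] at hy
      obtain ⟨x, hx⟩ := hy
      exact ⟨x, Subtype.ext hx⟩
    haveI : Module.Finite R (res.complex.X (i+2)) := hfin _ (by omega)
    have hproj : Module.Projective R (res.complex.X (i+2)) := moduleCat_projective _
    refine ⟨res.complex.X (i+2), _, _, inferInstance, hproj, q, hqsurj, ?_⟩
    rw [hq, LinearMap.ker_codRestrict]
    exact ih (i+1) (by omega)

lemma fpd_of_isTypeFP {N : ModuleCat R} {n : ℕ} (hn : 1 ≤ n) (h : IsTypeFP R N n) :
    FPd R n N := by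
  obtain ⟨res, hfin⟩ := h
  obtain ⟨m, rfl⟩ : ∃ m, n = m + 1 := ⟨n - 1, by omega⟩
  -- the augmentation map
  set ε : res.complex.X 0 ⟶ N :=
    res.π.f 0 ≫ (HomologicalComplex.singleObjXSelf (ComplexShape.down ℕ) 0 N).hom with hε
  have hεsurj : Function.Surjective ε := by
    rw [← ModuleCat.epi_iff_surjective]
    infer_instance
  have hker : LinearMap.range (res.complex.d 1 0).hom = LinearMap.ker ε.hom := by
    have h0 := range_eq_ker_of_exact _ _ _ res.exact₀
    rw [h0]
    ext x
    constructor
    · intro hx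
      rw [LinearMap.mem_ker] at hx ⊢
      rw [hε, ModuleCat.hom_comp, LinearMap.comp_apply, hx, map_zero]
    · intro hx
      rw [LinearMap.mem_ker] at hx ⊢
      rw [hε, ModuleCat.hom_comp, LinearMap.comp_apply] at hx
      exact hx
  haveI : Module.Finite R (res.complex.X 0) := hfin 0 (by omega)
  have hproj0 : Module.Projective R (res.complex.X 0) := moduleCat_projective _
  refine ⟨res.complex.X 0, _, _, inferInstance, hproj0, ε.hom, hεsurj, ?_⟩
  -- FPd m (ker ε)
  cases m with
  | zero =>
    haveI : Module.Finite R (res.complex.X 1) := hfin 1 (by omega)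
    rw [← hker]
    exact (Module.Finite.range (res.complex.d 1 0).hom : _)
  | succ m =>
    have hmem : ∀ x, (res.complex.d 1 0).hom x ∈ LinearMap.ker ε.hom := by
      intro x; rw [← hker]; exact ⟨x, rfl⟩
    set q : res.complex.X 1 →ₗ[R] LinearMap.ker ε.hom :=
      LinearMap.codRestrict _ (res.complex.d 1 0).hom hmem with hq
    have hqsurj : Function.Surjective q := by
      rintro ⟨y, hy⟩
      rw [← hker] at hy
      obtain ⟨x, hx⟩ := hy
      exact ⟨x, Subtype.ext hx⟩
    haveI : Module.Finite R (res.complex.X 1) := hfin 1 (by omega)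
    have hproj1 : Module.Projective R (res.complex.X 1) := moduleCat_projective _
    refine ⟨res.complex.X 1, _, _, inferInstance, hproj1, q, hqsurj, ?_⟩
    rw [hq, LinearMap.ker_codRestrict]
    exact fpd_syzygy res hfin m 0 (by omega)

end FromResolution

section Construction

open CategoryTheory

variable {R : Type} [Ring R]

/-- A chosen projective cover of a module, finitely generated whenever possible. -/
structure ModCov (R : Type) [Ring R] (N : ModuleCat R) where
  Q : ModuleCat R
  f : Q ⟶ N
  surj : Function.Surjective f
  proj : Projective Q
  fin : Module.Finite R N → Module.Finite R Q

noncomputable def modCov (N : ModuleCat R) : ModCov R N := by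
  by_cases h : Module.Finite R N
  · exact
    { Q := ModuleCat.of R (Fin (@Module.Finite.exists_fin' R N _ _ _ h).choose → R)
      f := ModuleCat.ofHom (@Module.Finite.exists_fin' R N _ _ _ h).choose_spec.choose
      surj := (@Module.Finite.exists_fin' R N _ _ _ h).choose_spec.choose_spec
      proj := ModuleCat.projective_of_free (Pi.basisFun R _)
      fin := fun _ => by change Module.Finite R (Fin _ → R); infer_instance }
  · exact
    { Q := ModuleCat.of R (↥N →₀ R)
      f := ModuleCat.ofHom (Finsupp.linearCombination R id)
      surj := fun x => ⟨Finsupp.single x 1, by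
        change Finsupp.linearCombination R id (Finsupp.single x 1) = x
        rw [Finsupp.linearCombination_single, one_smul, id]⟩
      proj := ModuleCat.projective_of_free Finsupp.basisSingleOne
      fin := fun hN => absurd hN h }

noncomputable def syz (K : ModuleCat R) : ℕ → ModuleCat R
  | 0 => K
  | (i+1) => ModuleCat.of R (LinearMap.ker (modCov (syz K i)).f.hom)

@[simp] lemma syz_zero (K : ModuleCat R) : syz K 0 = K := rfl

@[simp] lemma syz_succ (K : ModuleCat R) (i : ℕ) :
    syz K (i+1) = ModuleCat.of R (LinearMap.ker (modCov (syz K i)).f.hom) := rfl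

end Construction

section Complex

open CategoryTheory

variable {R : Type} [Ring R]

noncomputable def fpComplex (K : ModuleCat R) : ChainComplex (ModuleCat R) ℕ :=
  ChainComplex.of (fun i => (modCov (syz K i)).Q)
    (fun i => (modCov (syz K (i+1))).f ≫
      ModuleCat.ofHom (LinearMap.ker (modCov (syz K i)).f.hom).subtype)
    (fun i => by
      apply ModuleCat.hom_ext
      apply LinearMap.ext
      intro x
      have h2 : ((modCov (syz K (i+1))).f ((modCov (syz K (i+2))).f x).1) = 0 :=
        ((modCov (syz K (i+2))).f x).2
      simp only [ModuleCat.hom_comp, LinearMap.comp_apply, ModuleCat.hom_zero, LinearMap.zero_apply]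
      change (LinearMap.ker (modCov (syz K i)).f.hom).subtype
        ((modCov (syz K (i+1))).f ((LinearMap.ker (modCov (syz K (i+1))).f.hom).subtype
          ((modCov (syz K (i+2))).f x))) = 0
      exact congrArg Subtype.val h2)

@[simp] lemma fpComplex_X (K : ModuleCat R) (i : ℕ) :
    (fpComplex K).X i = (modCov (syz K i)).Q := rfl

lemma fpComplex_d (K : ModuleCat R) (i : ℕ) :
    (fpComplex K).d (i+1) i = (modCov (syz K (i+1))).f ≫
      ModuleCat.ofHom (LinearMap.ker (modCov (syz K i)).f.hom).subtype :=
  by unfold fpComplex; exact ChainComplex.of_d (fun i => (modCov (syz K i)).Q) (fun i => (modCov (syz K (i+1))).f ≫ ModuleCat.ofHom (LinearMap.ker (modCov (syz K i)).f.hom).subtype) i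

end Complex

section Resolution

open CategoryTheory

variable {R : Type} [Ring R]

lemma fpComplex_exact_succ (K : ModuleCat R) (n : ℕ) :
    (ShortComplex.mk ((fpComplex K).d (n+2) (n+1)) ((fpComplex K).d (n+1) n)
      ((fpComplex K).d_comp_d _ _ _)).Exact := by
  rw [ShortComplex.moduleCat_exact_iff]
  intro x hx
  have hx' : (fpComplex K).d (n+1) n x = 0 := hx
  rw [fpComplex_d] at hx'
  have hx0 : (modCov (syz K (n+1))).f x = 0 := by
    apply Subtype.ext
    exact hx'
  have hmem : x ∈ LinearMap.ker (modCov (syz K (n+1))).f.hom := hx0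
  obtain ⟨y, hy⟩ := (modCov (syz K (n+2))).surj ⟨x, hmem⟩
  refine ⟨y, ?_⟩
  show (fpComplex K).d (n+2) (n+1) y = x
  rw [fpComplex_d]
  change (LinearMap.ker (modCov (syz K (n+1))).f.hom).subtype ((modCov (syz K (n+2))).f y) = x
  rw [hy]
  rfl

lemma fpComplex_exactAt_succ (K : ModuleCat R) (n : ℕ) :
    (fpComplex K).ExactAt (n + 1) := by
  rw [HomologicalComplex.exactAt_iff' _ (n + 2) (n + 1) n (by simp) (by simp)]
  exact fpComplex_exact_succ K n

noncomputable def fpAug (K : ModuleCat R) : (fpComplex K).X 0 ⟶ K :=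
  (modCov (syz K 0)).f

lemma fpAug_w (K : ModuleCat R) : (fpComplex K).d 1 0 ≫ fpAug K = 0 := by
  rw [fpComplex_d]
  apply ModuleCat.hom_ext
  apply LinearMap.ext
  intro x
  have h2 : (modCov (syz K 0)).f ((modCov (syz K 1)).f x).1 = 0 :=
    ((modCov (syz K 1)).f x).2
  simp only [ModuleCat.hom_comp, LinearMap.comp_apply, ModuleCat.hom_zero, LinearMap.zero_apply]
  change (modCov (syz K 0)).f ((LinearMap.ker (modCov (syz K 0)).f.hom).subtype
    ((modCov (syz K 1)).f x)) = 0
  exact h2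

lemma fpAug_exact (K : ModuleCat R) :
    (ShortComplex.mk ((fpComplex K).d 1 0) (fpAug K) (fpAug_w K)).Exact := by
  rw [ShortComplex.moduleCat_exact_iff]
  intro x hx
  have hmem : x ∈ LinearMap.ker (modCov (syz K 0)).f.hom := hx
  obtain ⟨y, hy⟩ := (modCov (syz K 1)).surj ⟨x, hmem⟩
  refine ⟨y, ?_⟩
  show (fpComplex K).d 1 0 y = x
  rw [fpComplex_d]
  change (LinearMap.ker (modCov (syz K 0)).f.hom).subtype ((modCov (syz K 1)).f y) = x
  rw [hy]
  rfl

instance (K : ModuleCat R) : Epi (fpAug K) := by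
  rw [ModuleCat.epi_iff_surjective]
  exact (modCov (syz K 0)).surj

noncomputable def fpResolution (K : ModuleCat R) : ProjectiveResolution K where
  complex := fpComplex K
  projective n := (modCov (syz K n)).proj
  π := (ChainComplex.toSingle₀Equiv _ K).symm ⟨fpAug K, fpAug_w K⟩
  quasiIso := ⟨fun n => by
    cases n with
    | zero =>
      rw [ChainComplex.quasiIsoAt₀_iff, ShortComplex.quasiIso_iff_of_zeros']
      · refine (ShortComplex.exact_and_epi_g_iff_of_iso ?_).2
          ⟨fpAug_exact K, inferInstance⟩
        exact ShortComplex.isoMk (Iso.refl _) (Iso.refl _) (Iso.refl _)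
          (by rfl) (by rfl)
      all_goals rfl
    | succ n =>
      rw [quasiIsoAt_iff_exactAt']
      · exact fpComplex_exactAt_succ K n
      · apply ChainComplex.exactAt_succ_single_obj⟩

end Resolution

section Final

open CategoryTheory

variable {R : Type} [Ring R]

lemma fpd_syz {K : ModuleCat R} {m : ℕ} (h : FPd R m K) :
    ∀ i, i ≤ m → FPd R (m - i) (syz K i) := by
  intro i
  induction i with
  | zero => intro _; exact h
  | succ i ih =>
    intro hi
    have hprev : FPd R (m - i) (syz K i) := ih (by omega)
    haveI hfinprev : Module.Finite R (syz K i) := fpd_finite hprev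
    haveI : Module.Finite R ((modCov (syz K i)).Q) := (modCov (syz K i)).fin hfinprev
    haveI : Module.Projective R ((modCov (syz K i)).Q) := by
      haveI := (modCov (syz K i)).proj
      exact moduleCat_projective _
    have hsplit : FPd R (m - i - 1) (LinearMap.ker (modCov (syz K i)).f.hom) := by
      apply fpd_ker_of_surjective (modCov (syz K i)).f.hom (modCov (syz K i)).surj
      have : m - i = (m - i - 1) + 1 := by omega
      rw [← this]
      exact hprev
    have : m - (i + 1) = m - i - 1 := by omega
    rw [this]
    exact hsplit

lemma isTypeFP_of_fpd {K : ModuleCat R} {m : ℕ} (h : FPd R m K) : IsTypeFP R K m := by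
  refine ⟨fpResolution K, fun i hi => ?_⟩
  exact (modCov (syz K i)).fin (fpd_finite (fpd_syz h i hi))

/-- If `M` is of type `FP_n` and `0 → K → P → M → 0` is a short exact
sequence of `R`-modules with `P` finitely generated projective, then `K` is of type
`FP_{n-1}`. -/
theorem stmt3 (R : Type) [Ring R] (n : ℕ) (hn : 1 ≤ n)
    (M K P : Type) [AddCommGroup M] [AddCommGroup K] [AddCommGroup P]
    [Module R M] [Module R K] [Module R P]
    [Module.Finite R P] [Module.Projective R P]
    (f : K →ₗ[R] P) (g : P →ₗ[R] M)
    (hf : Function.Injective f) (hg : Function.Surjective g)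
    (hfg : Function.Exact f g)
    (hM : IsTypeFP R (ModuleCat.of R M) n) :
    IsTypeFP R (ModuleCat.of R K) (n - 1) := by
  have hM' : FPd R n M := fpd_of_isTypeFP hn hM
  obtain ⟨m, rfl⟩ : ∃ m, n = m + 1 := ⟨n - 1, by omega⟩
  have hK' : FPd R m (LinearMap.ker g) := fpd_ker_of_surjective g hg hM'
  have hrange : LinearMap.range f = LinearMap.ker g :=
    (LinearMap.exact_iff.mp hfg).symm
  have e : (LinearMap.ker g) ≃ₗ[R] K :=
    ((LinearEquiv.ofInjective f hf).trans (LinearEquiv.ofEq _ _ hrange)).symm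
  have hK : FPd R m K := fpd_congr e hK'
  have : m + 1 - 1 = m := by omega
  rw [this]
  exact isTypeFP_of_fpd hK
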